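/- Let μ_max ∈ ℝ and let x : [0,∞) → ℝ be differentiable with x(0) > 0. Suppose that for every t ≥ 0 with the property that x(s) ≥ 0 for all s ∈ [0,t], one has x'(t) ≥ -μ_max · x(t). Then x(t) > 0 for all t ≥ 0; in particular x(t) ≥ x(0) · exp(-μ_max · t). -/

import Mathlib

open MeasureTheory

private lemma keyA (μmax : ℝ) (x : ℝ → ℝ)
    (hdiff : ∀ t : ℝ, 0 ≤ t → DifferentiableAt ℝ x t)
    (hineq : ∀ t : ℝ, 0 ≤ t → (∀ s ∈ Set.Icc (0 : ℝ) t, 0 ≤ x s) →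
      -μmax * x t ≤ deriv x t)
    {T : ℝ} (hT : 0 ≤ T) (hnn : ∀ s ∈ Set.Icc (0 : ℝ) T, 0 ≤ x s) :
    ∀ t ∈ Set.Icc (0 : ℝ) T, x 0 * Real.exp (-μmax * t) ≤ x t := by
  set g : ℝ → ℝ := fun t => x t * Real.exp (μmax * t) with hg
  have hgderiv : ∀ t ∈ Set.Icc (0 : ℝ) T,
      HasDerivAt g ((deriv x t + μmax * x t) * Real.exp (μmax * t)) t := by
    intro t ht
    have hx : HasDerivAt x (deriv x t) t := (hdiff t ht.1).hasDerivAt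
    have h1 : HasDerivAt (fun u : ℝ => μmax * u) μmax t := by
      simpa using (hasDerivAt_id t).const_mul μmax
    have h2 := h1.exp
    have : HasDerivAt (fun u => x u * Real.exp (μmax * u)) _ t := hx.mul h2
    convert this using 1
    ring
  have hmono : MonotoneOn g (Set.Icc 0 T) := by
    apply monotoneOn_of_deriv_nonneg (convex_Icc 0 T)
    · intro t ht
      exact ((hgderiv t ht).differentiableAt).continuousAt.continuousWithinAt
    · intro t ht
      rw [interior_Icc] at ht
      exact ((hgderiv t ⟨ht.1.le, ht.2.le⟩).differentiableAt).differentiableWithinAt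
    · intro t ht
      rw [interior_Icc] at ht
      have := (hgderiv t ⟨ht.1.le, ht.2.le⟩).deriv
      rw [this]
      apply mul_nonneg _ (Real.exp_pos _).le
      have hi : -μmax * x t ≤ deriv x t := by
        apply hineq t ht.1.le
        intro s hs
        exact hnn s ⟨hs.1, hs.2.trans ht.2.le⟩
      linarith
  intro t ht
  have h0 : g 0 ≤ g t := hmono ⟨le_refl 0, hT⟩ ht ht.1
  have hg0 : g 0 = x 0 := by simp [hg]
  rw [hg0] at h0
  have := mul_le_mul_of_nonneg_right h0 (Real.exp_pos (-μmax * t)).le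
  calc x 0 * Real.exp (-μmax * t) ≤ x t * Real.exp (μmax * t) * Real.exp (-μmax * t) := this
    _ = x t := by rw [mul_assoc, ← Real.exp_add]; ring_nf; simp

/-- Case I of the non-negativity proposition: a Gronwall-type argument.  If
`x(0) > 0` and `x'(t) ≥ -μ_max x(t)` whenever `x` has remained non-negative on
`[0,t]`, then `x` stays positive and dominates `x(0)·exp(-μ_max t)`. -/
theorem stmt5
    (μmax : ℝ) (x : ℝ → ℝ)
    (hdiff : ∀ t : ℝ, 0 ≤ t → DifferentiableAt ℝ x t)
    (hx0 : 0 < x 0)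
    (hineq : ∀ t : ℝ, 0 ≤ t → (∀ s ∈ Set.Icc (0 : ℝ) t, 0 ≤ x s) →
      -μmax * x t ≤ deriv x t) :
    ∀ t : ℝ, 0 ≤ t → 0 < x t ∧ x 0 * Real.exp (-μmax * t) ≤ x t := by
  set s : Set ℝ := {T | 0 ≤ T ∧ ∀ u ∈ Set.Icc (0 : ℝ) T, 0 ≤ x u} with hs
  -- key: every t ≥ 0 is in s
  have hmain : ∀ t₀ : ℝ, 0 ≤ t₀ → t₀ ∈ s := by
    intro t₀ ht₀
    have hclosed : IsClosed (s ∩ Set.Icc 0 t₀) := by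
      apply IsSeqClosed.isClosed
      intro u L hu hL
      have hLIcc : L ∈ Set.Icc (0:ℝ) t₀ :=
        isClosed_Icc.mem_of_tendsto hL (Filter.Eventually.of_forall fun n => (hu n).2)
      refine ⟨⟨hLIcc.1, ?_⟩, hLIcc⟩
      intro v hv
      rcases lt_or_eq_of_le hv.2 with hvL | hvL
      · have : ∀ᶠ n in Filter.atTop, v < u n := hL.eventually (eventually_gt_nhds hvL)
        obtain ⟨n, hn⟩ := this.exists
        exact (hu n).1.2 v ⟨hv.1, hn.le⟩
      · subst hvL
        have hxc : Filter.Tendsto (fun n => x (u n)) Filter.atTop (nhds (x v)) :=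
          ((hdiff v hLIcc.1).continuousAt.tendsto).comp hL
        exact ge_of_tendsto' hxc fun n => (hu n).1.2 (u n) ⟨(hu n).1.1, le_refl _⟩
    have hsub : Set.Icc (0:ℝ) t₀ ⊆ s := by
      apply hclosed.Icc_subset_of_forall_exists_gt
      · exact ⟨le_refl 0, fun u hu => by
          have : u = 0 := le_antisymm hu.2 hu.1
          rw [this]; exact hx0.le⟩
      · intro T hT y hy
        -- T ∈ s ∩ Ico 0 t₀, y > T; find point of s in Ioc T y
        have hTs := hT.1
        have hpos : 0 < x T := by
          have := keyA μmax x hdiff hineq hTs.1 hTs.2 T ⟨hTs.1, le_refl _⟩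
          exact lt_of_lt_of_le (mul_pos hx0 (Real.exp_pos _)) this
        have hcont : ContinuousAt x T := (hdiff T hTs.1).continuousAt
        have : ∀ᶠ u in nhds T, 0 < x u := hcont.eventually (eventually_gt_nhds hpos)
        rw [Metric.eventually_nhds_iff] at this
        obtain ⟨ε, hε, hball⟩ := this
        refine ⟨min y (T + ε / 2), ⟨⟨?_, ?_⟩, ?_, min_le_left _ _⟩⟩
        · exact le_trans hTs.1 (le_min (le_of_lt hy) (by linarith))
        · intro u hu
          rcases le_or_gt u T with h | h
          · exact hTs.2 u ⟨hu.1, h⟩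
          · have hu2 : u ≤ T + ε / 2 := le_trans hu.2 (min_le_right _ _)
            have : dist u T < ε := by
              rw [Real.dist_eq, abs_of_pos (by linarith)]
              linarith
            exact (hball this).le
        · exact lt_min hy (by linarith)
    exact hsub ⟨ht₀, le_refl _⟩
  intro t ht
  have hts := hmain t ht
  have := keyA μmax x hdiff hineq hts.1 hts.2 t ⟨ht, le_refl _⟩
  exact ⟨lt_of_lt_of_le (mul_pos hx0 (Real.exp_pos _)) this, this⟩
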